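/- For n ≥ 2, the alternating subgroup 𝓑⁺(A_n) of the type A braid group is isomorphic to the group presented by generators R_0, R_1, …, R_{n−1} and relations: R_0R_1R_0 = R_1²R_0^{−1}R_1²; R_0R_j = R_jR_0 for j = 2,…,n−1; R_2R_1R_2 = R_1²R_0^{−1}R_2R_0^{−1}R_1²; R_2R_1²R_2 = R_0R_1R_2R_0^{−1}R_1R_0; R_1²R_j = R_jR_1R_0 and R_jR_1² = R_0R_1R_j for j = 3,…,n−1; R_iR_{i+1}R_i = R_{i+1}R_iR_{i+1} for i = 2,…,n−2; R_iR_j = R_jR_i for i,j = 2,…,n−1 with |i−j| > 1. An isomorphism is induced by R_i ↦ g_0 g_i (i = 0,…,n−1). -/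

import Mathlib

set_option maxHeartbeats 1000000


/-- Relations of the type A braid group on the `n + 2` generators `g_0, …, g_{n+1}`:
`g_i g_{i+1} g_i = g_{i+1} g_i g_{i+1}` and `g_i g_j = g_j g_i` for `|i-j| > 1`.
(The `n` here corresponds to `n - 2` in the statement "for `n ≥ 2`".) -/
def braidARels (n : ℕ) : Set (FreeGroup (Fin (n + 2))) :=
  { x | (∃ i : Fin (n + 2), (i : ℕ) < n + 1 ∧
          x = FreeGroup.of i * FreeGroup.of (i + 1) * FreeGroup.of i *
            (FreeGroup.of (i + 1) * FreeGroup.of i * FreeGroup.of (i + 1))⁻¹) ∨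
        (∃ i j : Fin (n + 2), (i : ℕ) + 1 < (j : ℕ) ∧
          x = FreeGroup.of i * FreeGroup.of j * (FreeGroup.of j * FreeGroup.of i)⁻¹) }

/-- The type A braid group `𝓑(A_{n+2})`. -/
def BraidGroupA (n : ℕ) : Type := PresentedGroup (braidARels n)

instance (n : ℕ) : Group (BraidGroupA n) := inferInstanceAs (Group (PresentedGroup (braidARels n)))

/-- The generators of the type A braid group. -/
def braidAGen (n : ℕ) (i : Fin (n + 2)) : BraidGroupA n := PresentedGroup.of i

/-- The sign character of the type A braid group, sending each generator to `-1`. -/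
def braidASign (n : ℕ) : BraidGroupA n →* ℤˣ :=
  PresentedGroup.toGroup (f := fun _ : Fin (n + 2) => (-1 : ℤˣ)) (by
    rintro x (⟨i, hi, rfl⟩ | ⟨i, j, hij, rfl⟩) <;> simp)

/-- The alternating subgroup `𝓑⁺(A_{n+2})` of the type A braid group. -/
def braidAAlt (n : ℕ) : Subgroup (BraidGroupA n) := (braidASign n).ker

/-- The relations of the Bourbaki-style presentation of `𝓑⁺(A_{n+2})`, on the generators
`R_0, …, R_{n+1}`. -/
def altBraidARels (n : ℕ) : Set (FreeGroup (Fin (n + 2))) :=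
  { x | x = FreeGroup.of 0 * FreeGroup.of 1 * FreeGroup.of 0 *
          (FreeGroup.of 1 ^ 2 * (FreeGroup.of 0)⁻¹ * FreeGroup.of 1 ^ 2)⁻¹ ∨
        (∃ j : Fin (n + 2), 2 ≤ (j : ℕ) ∧
          x = FreeGroup.of 0 * FreeGroup.of j * (FreeGroup.of j * FreeGroup.of 0)⁻¹) ∨
        (1 ≤ n ∧
          x = FreeGroup.of 2 * FreeGroup.of 1 * FreeGroup.of 2 *
            (FreeGroup.of 1 ^ 2 * (FreeGroup.of 0)⁻¹ * FreeGroup.of 2 * (FreeGroup.of 0)⁻¹ *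
              FreeGroup.of 1 ^ 2)⁻¹) ∨
        (1 ≤ n ∧
          x = FreeGroup.of 2 * FreeGroup.of 1 ^ 2 * FreeGroup.of 2 *
            (FreeGroup.of 0 * FreeGroup.of 1 * FreeGroup.of 2 * (FreeGroup.of 0)⁻¹ *
              FreeGroup.of 1 * FreeGroup.of 0)⁻¹) ∨
        (∃ j : Fin (n + 2), 3 ≤ (j : ℕ) ∧
          (x = FreeGroup.of 1 ^ 2 * FreeGroup.of j *
              (FreeGroup.of j * FreeGroup.of 1 * FreeGroup.of 0)⁻¹ ∨
           x = FreeGroup.of j * FreeGroup.of 1 ^ 2 *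
              (FreeGroup.of 0 * FreeGroup.of 1 * FreeGroup.of j)⁻¹)) ∨
        (∃ i : Fin (n + 2), 2 ≤ (i : ℕ) ∧ (i : ℕ) < n + 1 ∧
          x = FreeGroup.of i * FreeGroup.of (i + 1) * FreeGroup.of i *
            (FreeGroup.of (i + 1) * FreeGroup.of i * FreeGroup.of (i + 1))⁻¹) ∨
        (∃ i j : Fin (n + 2), 2 ≤ (i : ℕ) ∧ (i : ℕ) + 1 < (j : ℕ) ∧
          x = FreeGroup.of i * FreeGroup.of j * (FreeGroup.of j * FreeGroup.of i)⁻¹) }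

lemma mk_rel_eq_one {α : Type*} {rels : Set (FreeGroup α)} {x : FreeGroup α} (h : x ∈ rels) :
    PresentedGroup.mk rels x = 1 :=
  (QuotientGroup.eq_one_iff _).mpr (Subgroup.subset_normalClosure h)

namespace AltP

variable {n : ℕ}

/- ### Fin helpers -/

lemma fin_val2 (hn : 1 ≤ n) : ((2 : Fin (n + 2)) : ℕ) = 2 := by
  have h : ((2 : Fin (n + 2)) : ℕ) = 2 % (n + 2) := rfl
  rw [h]; exact Nat.mod_eq_of_lt (by omega)

lemma fin_add_one_val (i : Fin (n + 2)) (h : (i : ℕ) < n + 1) :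
    ((i + 1 : Fin (n + 2)) : ℕ) = (i : ℕ) + 1 := by
  have h1 : ((1 : Fin (n + 2)) : ℕ) = 1 := rfl
  rw [Fin.val_add, h1]
  exact Nat.mod_eq_of_lt (by omega)

lemma ne_one_of_two_le {i : Fin (n + 2)} (h : 2 ≤ (i : ℕ)) : i ≠ 1 :=
  Fin.ne_of_val_ne (by rw [Fin.val_one]; omega)

lemma zero_ne_one' : (0 : Fin (n + 2)) ≠ 1 :=
  Fin.ne_of_val_ne (by rw [Fin.val_zero, Fin.val_one]; omega)

lemma two_ne_one (hn : 1 ≤ n) : (2 : Fin (n + 2)) ≠ 1 :=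
  ne_one_of_two_le (by rw [fin_val2 hn])

lemma two_le_of_ne {i : Fin (n + 2)} (h0 : i ≠ 0) (h1 : i ≠ 1) : 2 ≤ (i : ℕ) := by
  by_contra h
  push_neg at h
  interval_cases hv : (i : ℕ)
  · exact h0 (Fin.ext (by rw [hv, Fin.val_zero]))
  · exact h1 (Fin.ext (by rw [hv, Fin.val_one]))

lemma zero_add_one : ((0 : Fin (n + 2)) + 1) = 1 := zero_add 1

lemma one_add_one : ((1 : Fin (n + 2)) + 1) = 2 := by
  apply Fin.ext
  rw [Fin.val_add, Fin.val_one]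
  have h : ((2 : Fin (n + 2)) : ℕ) = 2 % (n + 2) := rfl
  rw [h]

/- ### generators and relations -/

def r (i : Fin (n + 2)) : PresentedGroup (altBraidARels n) := PresentedGroup.of i

lemma rel_of_mem {x : FreeGroup (Fin (n + 2))} (h : x ∈ altBraidARels n) :
    PresentedGroup.mk (altBraidARels n) x = 1 := mk_rel_eq_one h

lemma relA : (r 0 : PresentedGroup (altBraidARels n)) * r 1 * r 0 = r 1 ^ 2 * (r 0)⁻¹ * r 1 ^ 2 := by
  have h := rel_of_mem (n := n) (Or.inl rfl)
  simp only [map_mul, map_pow, map_inv, mul_inv_eq_one] at h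
  exact h

lemma relB {j : Fin (n + 2)} (hj : 2 ≤ (j : ℕ)) :
    (r 0 : PresentedGroup (altBraidARels n)) * r j = r j * r 0 := by
  have h := rel_of_mem (n := n) (Or.inr (Or.inl ⟨j, hj, rfl⟩))
  simp only [map_mul, map_pow, map_inv, mul_inv_eq_one] at h
  exact h

lemma relC (hn : 1 ≤ n) :
    (r 2 : PresentedGroup (altBraidARels n)) * r 1 * r 2
      = r 1 ^ 2 * (r 0)⁻¹ * r 2 * (r 0)⁻¹ * r 1 ^ 2 := by
  have h := rel_of_mem (n := n) (Or.inr (Or.inr (Or.inl ⟨hn, rfl⟩)))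
  simp only [map_mul, map_pow, map_inv, mul_inv_eq_one] at h
  exact h

lemma relD (hn : 1 ≤ n) :
    (r 2 : PresentedGroup (altBraidARels n)) * r 1 ^ 2 * r 2
      = r 0 * r 1 * r 2 * (r 0)⁻¹ * r 1 * r 0 := by
  have h := rel_of_mem (n := n) (Or.inr (Or.inr (Or.inr (Or.inl ⟨hn, rfl⟩))))
  simp only [map_mul, map_pow, map_inv, mul_inv_eq_one] at h
  exact h

lemma relE1 {j : Fin (n + 2)} (hj : 3 ≤ (j : ℕ)) :
    (r 1 : PresentedGroup (altBraidARels n)) ^ 2 * r j = r j * r 1 * r 0 := by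
  have h := rel_of_mem (n := n) (Or.inr (Or.inr (Or.inr (Or.inr (Or.inl ⟨j, hj, Or.inl rfl⟩)))))
  simp only [map_mul, map_pow, map_inv, mul_inv_eq_one] at h
  exact h

lemma relE2 {j : Fin (n + 2)} (hj : 3 ≤ (j : ℕ)) :
    (r j : PresentedGroup (altBraidARels n)) * r 1 ^ 2 = r 0 * r 1 * r j := by
  have h := rel_of_mem (n := n) (Or.inr (Or.inr (Or.inr (Or.inr (Or.inl ⟨j, hj, Or.inr rfl⟩)))))
  simp only [map_mul, map_pow, map_inv, mul_inv_eq_one] at h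
  exact h

lemma relF {i : Fin (n + 2)} (h2 : 2 ≤ (i : ℕ)) (hi : (i : ℕ) < n + 1) :
    (r i : PresentedGroup (altBraidARels n)) * r (i + 1) * r i
      = r (i + 1) * r i * r (i + 1) := by
  have h := rel_of_mem (n := n)
    (Or.inr (Or.inr (Or.inr (Or.inr (Or.inr (Or.inl ⟨i, h2, hi, rfl⟩))))))
  simp only [map_mul, map_pow, map_inv, mul_inv_eq_one] at h
  exact h

lemma relG {i j : Fin (n + 2)} (h2 : 2 ≤ (i : ℕ)) (hij : (i : ℕ) + 1 < (j : ℕ)) :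
    (r i : PresentedGroup (altBraidARels n)) * r j = r j * r i := by
  have h := rel_of_mem (n := n)
    (Or.inr (Or.inr (Or.inr (Or.inr (Or.inr (Or.inr ⟨i, j, h2, hij, rfl⟩))))))
  simp only [map_mul, map_pow, map_inv, mul_inv_eq_one] at h
  exact h

lemma relBinv {j : Fin (n + 2)} (hj : 2 ≤ (j : ℕ)) :
    ((r 0)⁻¹ : PresentedGroup (altBraidARels n)) * r j = r j * (r 0)⁻¹ :=
  ((show Commute (r 0) (r j) by exact relB hj).inv_left).eq

lemma key1 : ((r 1 : PresentedGroup (altBraidARels n)) ^ 2 * (r 0)⁻¹) ^ 2 = r 0 * r 1 := by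
  calc (r 1 ^ 2 * (r 0)⁻¹ : PresentedGroup (altBraidARels n)) ^ 2
      = (r 1 ^ 2 * (r 0)⁻¹ * r 1 ^ 2) * (r 0)⁻¹ := by rw [pow_two]; group
    _ = (r 0 * r 1 * r 0) * (r 0)⁻¹ := by rw [← relA]
    _ = r 0 * r 1 := by group

lemma key2 : (((r 0)⁻¹ : PresentedGroup (altBraidARels n)) * r 1 ^ 2) ^ 2 = r 1 * r 0 := by
  calc ((r 0)⁻¹ * r 1 ^ 2 : PresentedGroup (altBraidARels n)) ^ 2
      = (r 0)⁻¹ * (r 1 ^ 2 * (r 0)⁻¹ * r 1 ^ 2) := by rw [pow_two]; group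
    _ = (r 0)⁻¹ * (r 0 * r 1 * r 0) := by rw [← relA]
    _ = r 1 * r 0 := by group



/- ### the automorphism τ (conjugation by g₀ in disguise) -/

def tf (i : Fin (n + 2)) : PresentedGroup (altBraidARels n) :=
  if i = 1 then r 1 ^ 2 * (r 0)⁻¹ else r i

lemma tf_one : (tf 1 : PresentedGroup (altBraidARels n)) = r 1 ^ 2 * (r 0)⁻¹ := if_pos rfl

lemma tf_ne {i : Fin (n + 2)} (h : i ≠ 1) : (tf i : PresentedGroup (altBraidARels n)) = r i :=
  if_neg h

def tf' (i : Fin (n + 2)) : PresentedGroup (altBraidARels n) :=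
  if i = 1 then (r 0)⁻¹ * r 1 ^ 2 else r i

lemma tf'_one : (tf' 1 : PresentedGroup (altBraidARels n)) = (r 0)⁻¹ * r 1 ^ 2 := if_pos rfl

lemma tf'_ne {i : Fin (n + 2)} (h : i ≠ 1) : (tf' i : PresentedGroup (altBraidARels n)) = r i :=
  if_neg h

lemma tau_aux : ∀ x ∈ altBraidARels n, FreeGroup.lift tf x = 1 := by
  rintro x (rfl | ⟨j, hj, rfl⟩ | ⟨hn, rfl⟩ | ⟨hn, rfl⟩ | ⟨j, hj, rfl | rfl⟩ |
    ⟨i, h2, hi, rfl⟩ | ⟨i, j, h2, hij, rfl⟩) <;>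
    simp only [map_mul, map_pow, map_inv, FreeGroup.lift_apply_of, mul_inv_eq_one]
  · -- A
    rw [tf_one, tf_ne zero_ne_one', key1]
    simp only [pow_two]
    group
  · -- B
    rw [tf_ne zero_ne_one', tf_ne (ne_one_of_two_le hj)]
    exact relB hj
  · -- C
    have h2c : 2 ≤ ((2 : Fin (n + 2)) : ℕ) := le_of_eq (fin_val2 hn).symm
    rw [tf_one, tf_ne (two_ne_one hn), tf_ne zero_ne_one', key1]
    calc r 2 * (r 1 ^ 2 * (r 0)⁻¹) * r 2
        = (r 2 * r 1 ^ 2) * ((r 0)⁻¹ * r 2) := by group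
      _ = (r 2 * r 1 ^ 2) * (r 2 * (r 0)⁻¹) := by rw [relBinv h2c]
      _ = (r 2 * r 1 ^ 2 * r 2) * (r 0)⁻¹ := by group
      _ = (r 0 * r 1 * r 2 * (r 0)⁻¹ * r 1 * r 0) * (r 0)⁻¹ := by rw [relD hn]
      _ = (r 0 * r 1) * (r 2 * (r 0)⁻¹) * r 1 := by group
      _ = (r 0 * r 1) * ((r 0)⁻¹ * r 2) * r 1 := by rw [← relBinv h2c]
      _ = r 0 * r 1 * (r 0)⁻¹ * r 2 * (r 0)⁻¹ * (r 0 * r 1) := by group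
  · -- D
    have h2c : 2 ≤ ((2 : Fin (n + 2)) : ℕ) := le_of_eq (fin_val2 hn).symm
    rw [tf_one, tf_ne (two_ne_one hn), tf_ne zero_ne_one', key1]
    calc r 2 * (r 0 * r 1) * r 2
        = (r 2 * r 0) * (r 1 * r 2) := by group
      _ = (r 0 * r 2) * (r 1 * r 2) := by rw [← relB h2c]
      _ = r 0 * (r 2 * r 1 * r 2) := by group
      _ = r 0 * (r 1 ^ 2 * (r 0)⁻¹ * r 2 * (r 0)⁻¹ * r 1 ^ 2) := by rw [relC hn]
      _ = r 0 * (r 1 ^ 2 * (r 0)⁻¹) * r 2 * (r 0)⁻¹ * (r 1 ^ 2 * (r 0)⁻¹) * r 0 := by group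
  · -- E1
    have hj2 : 2 ≤ (j : ℕ) := by omega
    rw [tf_one, tf_ne (ne_one_of_two_le hj2), tf_ne zero_ne_one', key1]
    symm
    calc r j * (r 1 ^ 2 * (r 0)⁻¹) * r 0
        = r j * r 1 ^ 2 := by group
      _ = r 0 * r 1 * r j := relE2 hj
      _ = (r 0 * r 1) * r j := by group
  · -- E2
    have hj2 : 2 ≤ (j : ℕ) := by omega
    rw [tf_one, tf_ne (ne_one_of_two_le hj2), tf_ne zero_ne_one', key1]
    calc r j * (r 0 * r 1)
        = (r j * r 0) * r 1 := by group
      _ = (r 0 * r j) * r 1 := by rw [← relB hj2]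
      _ = r 0 * (r j * r 1 * r 0) * (r 0)⁻¹ := by group
      _ = r 0 * (r 1 ^ 2 * r j) * (r 0)⁻¹ := by rw [← relE1 hj]
      _ = (r 0 * r 1 ^ 2) * (r j * (r 0)⁻¹) := by group
      _ = (r 0 * r 1 ^ 2) * ((r 0)⁻¹ * r j) := by rw [← relBinv hj2]
      _ = r 0 * (r 1 ^ 2 * (r 0)⁻¹) * r j := by group
  · -- F
    have hv : ((i + 1 : Fin (n + 2)) : ℕ) = (i : ℕ) + 1 := fin_add_one_val i hi
    rw [tf_ne (ne_one_of_two_le h2), tf_ne (ne_one_of_two_le (by omega : 2 ≤ ((i + 1 : Fin (n + 2)) : ℕ)))]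
    exact relF h2 hi
  · -- G
    rw [tf_ne (ne_one_of_two_le h2), tf_ne (ne_one_of_two_le (by omega : 2 ≤ (j : ℕ)))]
    exact relG h2 hij

lemma tau'_aux : ∀ x ∈ altBraidARels n, FreeGroup.lift tf' x = 1 := by
  rintro x (rfl | ⟨j, hj, rfl⟩ | ⟨hn, rfl⟩ | ⟨hn, rfl⟩ | ⟨j, hj, rfl | rfl⟩ |
    ⟨i, h2, hi, rfl⟩ | ⟨i, j, h2, hij, rfl⟩) <;>
    simp only [map_mul, map_pow, map_inv, FreeGroup.lift_apply_of, mul_inv_eq_one]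
  · -- A
    rw [tf'_one, tf'_ne zero_ne_one', key2]
    simp only [pow_two]
    group
  · -- B
    rw [tf'_ne zero_ne_one', tf'_ne (ne_one_of_two_le hj)]
    exact relB hj
  · -- C
    have h2c : 2 ≤ ((2 : Fin (n + 2)) : ℕ) := le_of_eq (fin_val2 hn).symm
    rw [tf'_one, tf'_ne (two_ne_one hn), tf'_ne zero_ne_one', key2]
    calc r 2 * ((r 0)⁻¹ * r 1 ^ 2) * r 2
        = (r 2 * (r 0)⁻¹) * (r 1 ^ 2 * r 2) := by group
      _ = ((r 0)⁻¹ * r 2) * (r 1 ^ 2 * r 2) := by rw [relBinv h2c]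
      _ = (r 0)⁻¹ * (r 2 * r 1 ^ 2 * r 2) := by group
      _ = (r 0)⁻¹ * (r 0 * r 1 * r 2 * (r 0)⁻¹ * r 1 * r 0) := by rw [relD hn]
      _ = (r 1 * r 0) * (r 0)⁻¹ * r 2 * (r 0)⁻¹ * (r 1 * r 0) := by group
  · -- D
    have h2c : 2 ≤ ((2 : Fin (n + 2)) : ℕ) := le_of_eq (fin_val2 hn).symm
    rw [tf'_one, tf'_ne (two_ne_one hn), tf'_ne zero_ne_one', key2]
    calc r 2 * (r 1 * r 0) * r 2
        = (r 2 * r 1) * (r 0 * r 2) := by group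
      _ = (r 2 * r 1) * (r 2 * r 0) := by rw [relB h2c]
      _ = (r 2 * r 1 * r 2) * r 0 := by group
      _ = (r 1 ^ 2 * (r 0)⁻¹ * r 2 * (r 0)⁻¹ * r 1 ^ 2) * r 0 := by rw [relC hn]
      _ = r 1 ^ 2 * ((r 0)⁻¹ * r 2) * ((r 0)⁻¹ * r 1 ^ 2) * r 0 := by group
      _ = r 1 ^ 2 * (r 2 * (r 0)⁻¹) * ((r 0)⁻¹ * r 1 ^ 2) * r 0 := by rw [relBinv h2c]
      _ = r 0 * ((r 0)⁻¹ * r 1 ^ 2) * r 2 * (r 0)⁻¹ * ((r 0)⁻¹ * r 1 ^ 2) * r 0 := by group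
  · -- E1
    have hj2 : 2 ≤ (j : ℕ) := by omega
    rw [tf'_one, tf'_ne (ne_one_of_two_le hj2), tf'_ne zero_ne_one', key2]
    symm
    calc r j * ((r 0)⁻¹ * r 1 ^ 2) * r 0
        = (r j * (r 0)⁻¹) * r 1 ^ 2 * r 0 := by group
      _ = ((r 0)⁻¹ * r j) * r 1 ^ 2 * r 0 := by rw [← relBinv hj2]
      _ = (r 0)⁻¹ * (r j * r 1 ^ 2) * r 0 := by group
      _ = (r 0)⁻¹ * (r 0 * r 1 * r j) * r 0 := by rw [relE2 hj]
      _ = r 1 * (r j * r 0) := by group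
      _ = r 1 * (r 0 * r j) := by rw [← relB hj2]
      _ = (r 1 * r 0) * r j := by group
  · -- E2
    have hj2 : 2 ≤ (j : ℕ) := by omega
    rw [tf'_one, tf'_ne (ne_one_of_two_le hj2), tf'_ne zero_ne_one', key2]
    calc r j * (r 1 * r 0)
        = (r j * r 1 * r 0) := by group
      _ = r 1 ^ 2 * r j := by rw [← relE1 hj]
      _ = r 0 * ((r 0)⁻¹ * r 1 ^ 2) * r j := by group
  · -- F
    have hv : ((i + 1 : Fin (n + 2)) : ℕ) = (i : ℕ) + 1 := fin_add_one_val i hi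
    rw [tf'_ne (ne_one_of_two_le h2), tf'_ne (ne_one_of_two_le (by omega : 2 ≤ ((i + 1 : Fin (n + 2)) : ℕ)))]
    exact relF h2 hi
  · -- G
    rw [tf'_ne (ne_one_of_two_le h2), tf'_ne (ne_one_of_two_le (by omega : 2 ≤ (j : ℕ)))]
    exact relG h2 hij

def tauHom : PresentedGroup (altBraidARels n) →* PresentedGroup (altBraidARels n) :=
  PresentedGroup.toGroup tau_aux

def tauHom' : PresentedGroup (altBraidARels n) →* PresentedGroup (altBraidARels n) :=
  PresentedGroup.toGroup tau'_aux

lemma tauHom_of (i : Fin (n + 2)) : tauHom (r i) = tf i := PresentedGroup.toGroup.of _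

lemma tauHom'_of (i : Fin (n + 2)) : tauHom' (r i) = tf' i := PresentedGroup.toGroup.of _

lemma tau_tau' : (tauHom.comp tauHom' : PresentedGroup (altBraidARels n) →* _) = MonoidHom.id _ := by
  refine PresentedGroup.ext fun i => ?_
  show tauHom (tauHom' (r i)) = r i
  by_cases h : i = 1
  · subst h
    rw [tauHom'_of, tf'_one, map_mul, map_pow, map_inv, tauHom_of, tauHom_of, tf_one,
      tf_ne zero_ne_one', key1]
    try simp only [pow_two]
    group
  · rw [tauHom'_of, tf'_ne h, tauHom_of, tf_ne h]

lemma tau'_tau : (tauHom'.comp tauHom : PresentedGroup (altBraidARels n) →* _) = MonoidHom.id _ := by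
  refine PresentedGroup.ext fun i => ?_
  show tauHom' (tauHom (r i)) = r i
  by_cases h : i = 1
  · subst h
    rw [tauHom_of, tf_one, map_mul, map_pow, map_inv, tauHom'_of, tauHom'_of, tf'_one,
      tf'_ne zero_ne_one', key2]
    try simp only [pow_two]
    group
  · rw [tauHom_of, tf_ne h, tauHom'_of, tf'_ne h]

def tauE : MulAut (PresentedGroup (altBraidARels n)) :=
  { toFun := tauHom
    invFun := tauHom'
    left_inv := fun x => DFunLike.congr_fun tau'_tau x
    right_inv := fun x => DFunLike.congr_fun tau_tau' x
    map_mul' := tauHom.map_mul }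

lemma tauE_apply (x : PresentedGroup (altBraidARels n)) : tauE x = tauHom x := rfl

lemma tauE_sq : (tauE : MulAut (PresentedGroup (altBraidARels n))) ^ (2 : ℤ)
    = MulAut.conj (r 0) := by
  have h : (tauHom.comp tauHom : PresentedGroup (altBraidARels n) →* _)
      = (MulAut.conj (r 0)).toMonoidHom := by
    refine PresentedGroup.ext fun i => ?_
    show tauHom (tauHom (r i)) = r 0 * r i * (r 0)⁻¹
    by_cases h : i = 1
    · subst h
      rw [tauHom_of, tf_one, map_mul, map_pow, map_inv, tauHom_of, tauHom_of, tf_one,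
        tf_ne zero_ne_one', key1]
    · rw [tauHom_of, tf_ne h, tauHom_of, tf_ne h]
      by_cases h0 : i = 0
      · subst h0
        group
      · have h2 : 2 ≤ (i : ℕ) := two_le_of_ne h0 h
        symm
        rw [mul_inv_eq_iff_eq_mul]
        exact relB h2
  ext x
  show (tauE ^ (2 : ℤ)) x = r 0 * x * (r 0)⁻¹
  have : (tauE ^ (2 : ℤ)) x = tauHom (tauHom x) := by
    rw [show (2 : ℤ) = 1 + 1 by norm_num, zpow_add, zpow_one]
    rfl
  rw [this]
  exact DFunLike.congr_fun h x

lemma tauE_even (m : ℤ) (x : PresentedGroup (altBraidARels n)) :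
    (tauE ^ (2 * m)) x = r 0 ^ m * x * (r 0 ^ m)⁻¹ := by
  have : (tauE : MulAut (PresentedGroup (altBraidARels n))) ^ (2 * m)
      = MulAut.conj (r 0 ^ m) := by
    rw [zpow_mul, tauE_sq, ← map_zpow]
  rw [this, MulAut.conj_apply]



/- ### braid group side -/

def bg (i : Fin (n + 2)) : BraidGroupA n := braidAGen n i

lemma braid_rel (i : Fin (n + 2)) (hi : (i : ℕ) < n + 1) :
    (bg i : BraidGroupA n) * bg (i + 1) * bg i = bg (i + 1) * bg i * bg (i + 1) := by
  have h := mk_rel_eq_one (rels := braidARels n) (Or.inl ⟨i, hi, rfl⟩)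
  simp only [map_mul, map_pow, map_inv, mul_inv_eq_one] at h
  exact h

lemma comm_rel (i j : Fin (n + 2)) (hij : (i : ℕ) + 1 < (j : ℕ)) :
    (bg i : BraidGroupA n) * bg j = bg j * bg i := by
  have h := mk_rel_eq_one (rels := braidARels n) (Or.inr ⟨i, j, hij, rfl⟩)
  simp only [map_mul, map_pow, map_inv, mul_inv_eq_one] at h
  exact h

/- ### the homomorphism Ψ from the braid group to P ⋊ ℤ -/

def phiAct : Multiplicative ℤ →* MulAut (PresentedGroup (altBraidARels n)) :=
  zpowersHom _ tauE

def psif (i : Fin (n + 2)) :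
    SemidirectProduct (PresentedGroup (altBraidARels n)) (Multiplicative ℤ) (phiAct (n := n)) :=
  ⟨(tauE ^ (-1 : ℤ)) (r i), Multiplicative.ofAdd (-1)⟩

lemma tauE_pow_apply (j k : ℤ) (x : PresentedGroup (altBraidARels n)) :
    (tauE ^ j) ((tauE ^ k) x) = (tauE ^ (j + k)) x := by
  rw [← MulAut.mul_apply, ← zpow_add]

lemma tauE_two_apply (x : PresentedGroup (altBraidARels n)) :
    (tauE ^ (2 : ℤ)) x = r 0 * x * (r 0)⁻¹ := by rw [tauE_sq, MulAut.conj_apply]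

lemma tauE_one_apply (x : PresentedGroup (altBraidARels n)) :
    (tauE ^ (1 : ℤ)) x = tauHom x := by rw [zpow_one]; rfl

lemma tauE_zero_apply (x : PresentedGroup (altBraidARels n)) :
    (tauE ^ (0 : ℤ)) x = x := by rw [zpow_zero]; rfl

lemma collapse3 (x y z w u v : PresentedGroup (altBraidARels n))
    (h : r 0 * x * (r 0)⁻¹ * tauHom y * z = r 0 * u * (r 0)⁻¹ * tauHom v * w) :
    tauE⁻¹ x * (tauE ^ (2 : ℕ))⁻¹ y * (tauE ^ (3 : ℕ))⁻¹ z
      = tauE⁻¹ u * (tauE ^ (2 : ℕ))⁻¹ v * (tauE ^ (3 : ℕ))⁻¹ w := by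
  apply (tauE ^ (3 : ℕ)).injective
  simp only [map_mul, ← MulAut.mul_apply]
  have e1 : (tauE ^ (3 : ℕ) * tauE⁻¹ : MulAut (PresentedGroup (altBraidARels n)))
      = tauE ^ (2 : ℤ) := by group
  have e2 : (tauE ^ (3 : ℕ) * (tauE ^ (2 : ℕ))⁻¹ : MulAut (PresentedGroup (altBraidARels n)))
      = tauE ^ (1 : ℤ) := by group
  have e3 : (tauE ^ (3 : ℕ) * (tauE ^ (3 : ℕ))⁻¹ : MulAut (PresentedGroup (altBraidARels n)))
      = 1 := by group
  rw [e1, e2, e3, tauE_two_apply, tauE_two_apply, tauE_one_apply, tauE_one_apply,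
    MulAut.one_apply, MulAut.one_apply]
  exact h

lemma collapse2 (x y u v : PresentedGroup (altBraidARels n))
    (h : tauHom x * y = tauHom u * v) :
    tauE⁻¹ x * (tauE ^ (2 : ℕ))⁻¹ y = tauE⁻¹ u * (tauE ^ (2 : ℕ))⁻¹ v := by
  apply (tauE ^ (2 : ℕ)).injective
  simp only [map_mul, ← MulAut.mul_apply]
  have e1 : (tauE ^ (2 : ℕ) * tauE⁻¹ : MulAut (PresentedGroup (altBraidARels n)))
      = tauE ^ (1 : ℤ) := by group
  have e2 : (tauE ^ (2 : ℕ) * (tauE ^ (2 : ℕ))⁻¹ : MulAut (PresentedGroup (altBraidARels n)))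
      = 1 := by group
  rw [e1, e2, tauE_one_apply, tauE_one_apply, MulAut.one_apply, MulAut.one_apply]
  exact h

lemma psi_aux : ∀ x ∈ braidARels n, FreeGroup.lift psif x = 1 := by
  rintro x (⟨i, hi, rfl⟩ | ⟨i, j, hij, rfl⟩) <;>
    simp only [map_mul, map_pow, map_inv, mul_inv_eq_one, FreeGroup.lift_apply_of]
  · apply SemidirectProduct.ext
    · simp only [SemidirectProduct.mul_left, SemidirectProduct.mul_right, psif]
      simp only [SemidirectProduct.mul_left, SemidirectProduct.mul_right, psif, phiAct,
        zpowersHom_apply, toAdd_mul, toAdd_ofAdd, tauE_pow_apply]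
      norm_num
      apply collapse3
      by_cases h0 : i = 0
      · subst h0
        rw [zero_add_one, tauHom_of, tauHom_of, tf_one, tf_ne zero_ne_one']
        simp only [pow_two]
        group
      · by_cases h1 : i = 1
        · subst h1
          have hn : 1 ≤ n := by
            have : ((1 : Fin (n + 2)) : ℕ) = 1 := rfl
            omega
          have h2c : 2 ≤ ((2 : Fin (n + 2)) : ℕ) := le_of_eq (fin_val2 hn).symm
          rw [one_add_one, tauHom_of, tauHom_of, tf_one, tf_ne (two_ne_one hn)]
          calc r 0 * r 1 * (r 0)⁻¹ * r 2 * r 1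
              = (r 0 * r 1) * ((r 0)⁻¹ * r 2) * r 1 := by group
            _ = (r 0 * r 1) * (r 2 * (r 0)⁻¹) * r 1 := by rw [relBinv h2c]
            _ = (r 0 * r 1 * r 2 * (r 0)⁻¹ * r 1 * r 0) * (r 0)⁻¹ := by group
            _ = (r 2 * r 1 ^ 2 * r 2) * (r 0)⁻¹ := by rw [← relD hn]
            _ = (r 2 * r 1 ^ 2) * (r 2 * (r 0)⁻¹) := by group
            _ = (r 2 * r 1 ^ 2) * ((r 0)⁻¹ * r 2) := by rw [← relBinv h2c]
            _ = (r 2 * r 0) * ((r 0)⁻¹ * r 1 ^ 2 * (r 0)⁻¹ * r 2) := by group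
            _ = (r 0 * r 2) * ((r 0)⁻¹ * r 1 ^ 2 * (r 0)⁻¹ * r 2) := by rw [← relB h2c]
            _ = r 0 * r 2 * (r 0)⁻¹ * (r 1 ^ 2 * (r 0)⁻¹) * r 2 := by group
        · have h2 : 2 ≤ (i : ℕ) := two_le_of_ne h0 h1
          have hv : ((i + 1 : Fin (n + 2)) : ℕ) = (i : ℕ) + 1 := fin_add_one_val i hi
          have hv2 : 2 ≤ ((i + 1 : Fin (n + 2)) : ℕ) := by omega
          rw [tauHom_of, tauHom_of, tf_ne (ne_one_of_two_le h2), tf_ne (ne_one_of_two_le hv2)]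
          calc r 0 * r i * (r 0)⁻¹ * r (i + 1) * r i
              = (r 0 * r i) * ((r 0)⁻¹ * r (i + 1)) * r i := by group
            _ = (r 0 * r i) * (r (i + 1) * (r 0)⁻¹) * r i := by rw [relBinv hv2]
            _ = (r 0 * r i * r (i + 1)) * ((r 0)⁻¹ * r i) := by group
            _ = (r 0 * r i * r (i + 1)) * (r i * (r 0)⁻¹) := by rw [relBinv h2]
            _ = r 0 * (r i * r (i + 1) * r i) * (r 0)⁻¹ := by group
            _ = r 0 * (r (i + 1) * r i * r (i + 1)) * (r 0)⁻¹ := by rw [relF h2 hi]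
            _ = (r 0 * r (i + 1) * r i) * (r (i + 1) * (r 0)⁻¹) := by group
            _ = (r 0 * r (i + 1) * r i) * ((r 0)⁻¹ * r (i + 1)) := by rw [← relBinv hv2]
            _ = (r 0 * r (i + 1)) * (r i * (r 0)⁻¹) * r (i + 1) := by group
            _ = (r 0 * r (i + 1)) * ((r 0)⁻¹ * r i) * r (i + 1) := by rw [← relBinv h2]
            _ = r 0 * r (i + 1) * (r 0)⁻¹ * r i * r (i + 1) := by group
    · simp [psif]
  · apply SemidirectProduct.ext
    · simp only [SemidirectProduct.mul_left, SemidirectProduct.mul_right, psif]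
      simp only [SemidirectProduct.mul_left, SemidirectProduct.mul_right, psif, phiAct,
        zpowersHom_apply, toAdd_mul, toAdd_ofAdd, tauE_pow_apply]
      norm_num
      apply collapse2
      by_cases h0 : i = 0
      · subst h0
        have hj2 : 2 ≤ (j : ℕ) := by omega
        rw [tauHom_of, tauHom_of, tf_ne zero_ne_one', tf_ne (ne_one_of_two_le hj2)]
        exact relB hj2
      · by_cases h1 : i = 1
        · subst h1
          have hj3 : 3 ≤ (j : ℕ) := by
            have : ((1 : Fin (n + 2)) : ℕ) = 1 := rfl
            omega
          have hj2 : 2 ≤ (j : ℕ) := by omega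
          rw [tauHom_of, tauHom_of, tf_one, tf_ne (ne_one_of_two_le hj2)]
          calc r 1 ^ 2 * (r 0)⁻¹ * r j
              = r 1 ^ 2 * ((r 0)⁻¹ * r j) := by group
            _ = r 1 ^ 2 * (r j * (r 0)⁻¹) := by rw [relBinv hj2]
            _ = (r 1 ^ 2 * r j) * (r 0)⁻¹ := by group
            _ = (r j * r 1 * r 0) * (r 0)⁻¹ := by rw [relE1 hj3]
            _ = r j * r 1 := by group
        · have h2 : 2 ≤ (i : ℕ) := two_le_of_ne h0 h1
          have hj2 : 2 ≤ (j : ℕ) := by omega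
          rw [tauHom_of, tauHom_of, tf_ne (ne_one_of_two_le h2), tf_ne (ne_one_of_two_le hj2)]
          exact relG h2 hij
    · simp [psif]

def Psi : BraidGroupA n →*
    SemidirectProduct (PresentedGroup (altBraidARels n)) (Multiplicative ℤ) (phiAct (n := n)) :=
  PresentedGroup.toGroup psi_aux

lemma Psi_of (i : Fin (n + 2)) : Psi (braidAGen n i) = psif i := PresentedGroup.toGroup.of _

/- ### braid relations needed for Φ -/

lemma h01 : (bg 0 : BraidGroupA n) * bg 1 * bg 0 = bg 1 * bg 0 * bg 1 := by
  have h := braid_rel (n := n) 0 (by rw [Fin.val_zero]; omega)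
  rwa [zero_add_one] at h

lemma h12 (hn : 1 ≤ n) : (bg 1 : BraidGroupA n) * bg 2 * bg 1 = bg 2 * bg 1 * bg 2 := by
  have h := braid_rel (n := n) 1 (by rw [Fin.val_one]; omega)
  rwa [one_add_one] at h

lemma h02 (hn : 1 ≤ n) : (bg 0 : BraidGroupA n) * bg 2 = bg 2 * bg 0 := by
  refine comm_rel 0 2 ?_
  rw [Fin.val_zero, fin_val2 hn]
  omega

lemma h0j {j : Fin (n + 2)} (hj : 2 ≤ (j : ℕ)) :
    (bg 0 : BraidGroupA n) * bg j = bg j * bg 0 := by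
  refine comm_rel 0 j ?_
  rw [Fin.val_zero]
  omega

lemma h1j {j : Fin (n + 2)} (hj : 3 ≤ (j : ℕ)) :
    (bg 1 : BraidGroupA n) * bg j = bg j * bg 1 := by
  refine comm_rel 1 j ?_
  rw [Fin.val_one]
  omega

/- ### the homomorphism Φ : P → braid group, R_i ↦ g_0 g_i -/

def pf (i : Fin (n + 2)) : BraidGroupA n := bg 0 * bg i

lemma phi_aux : ∀ x ∈ altBraidARels n, FreeGroup.lift pf x = 1 := by
  rintro x (rfl | ⟨j, hj, rfl⟩ | ⟨hn, rfl⟩ | ⟨hn, rfl⟩ | ⟨j, hj, rfl | rfl⟩ |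
    ⟨i, h2, hi, rfl⟩ | ⟨i, j, h2, hij, rfl⟩) <;>
    simp only [map_mul, map_pow, map_inv, mul_inv_eq_one, FreeGroup.lift_apply_of]
  · -- A
    show (bg 0 * bg 0) * (bg 0 * bg 1) * (bg 0 * bg 0)
        = (bg 0 * bg 1) ^ 2 * (bg 0 * bg 0)⁻¹ * (bg 0 * bg 1) ^ 2
    simp only [pow_two]
    calc (bg 0 * bg 0) * (bg 0 * bg 1) * (bg 0 * bg 0)
        = bg 0 * bg 0 * (bg 0 * bg 1 * bg 0) * bg 0 := by group
      _ = bg 0 * bg 0 * (bg 1 * bg 0 * bg 1) * bg 0 := by rw [h01]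
      _ = bg 0 * (bg 0 * bg 1 * bg 0) * (bg 0)⁻¹ * (bg 0 * bg 1 * bg 0) := by group
      _ = bg 0 * (bg 1 * bg 0 * bg 1) * (bg 0)⁻¹ * (bg 1 * bg 0 * bg 1) := by rw [h01]
      _ = (bg 0 * bg 1) * (bg 0 * bg 1) * (bg 0 * bg 0)⁻¹ * ((bg 0 * bg 1) * (bg 0 * bg 1)) := by
          group
  · -- B
    show (bg 0 * bg 0) * (bg 0 * bg j) = (bg 0 * bg j) * (bg 0 * bg 0)
    have hxj : Commute (bg 0 : BraidGroupA n) (bg j) := h0j hj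
    have h1 : Commute (bg 0 : BraidGroupA n) (bg 0 * bg j) := (Commute.refl _).mul_right hxj
    exact h1.mul_left h1
  · -- C
    show (bg 0 * bg 2) * (bg 0 * bg 1) * (bg 0 * bg 2)
        = (bg 0 * bg 1) ^ 2 * (bg 0 * bg 0)⁻¹ * (bg 0 * bg 2) * (bg 0 * bg 0)⁻¹ *
          (bg 0 * bg 1) ^ 2
    simp only [pow_two]
    calc (bg 0 * bg 2) * (bg 0 * bg 1) * (bg 0 * bg 2)
        = bg 0 * (bg 2 * bg 0) * bg 1 * (bg 0 * bg 2) := by group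
      _ = bg 0 * (bg 0 * bg 2) * bg 1 * (bg 0 * bg 2) := by rw [← h02 hn]
      _ = bg 0 * bg 0 * bg 2 * bg 1 * (bg 0 * bg 2) := by group
      _ = bg 0 * bg 0 * bg 2 * bg 1 * (bg 2 * bg 0) := by rw [h02 hn]
      _ = bg 0 * bg 0 * (bg 2 * bg 1 * bg 2) * bg 0 := by group
      _ = bg 0 * bg 0 * (bg 1 * bg 2 * bg 1) * bg 0 := by rw [← h12 hn]
      _ = bg 0 * (bg 0 * bg 1 * bg 0) * (bg 0)⁻¹ * bg 2 * (bg 0)⁻¹ * (bg 0 * bg 1 * bg 0) := by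
          group
      _ = bg 0 * (bg 1 * bg 0 * bg 1) * (bg 0)⁻¹ * bg 2 * (bg 0)⁻¹ * (bg 1 * bg 0 * bg 1) := by
          rw [h01]
      _ = (bg 0 * bg 1) * (bg 0 * bg 1) * (bg 0 * bg 0)⁻¹ * (bg 0 * bg 2) * (bg 0 * bg 0)⁻¹ *
          ((bg 0 * bg 1) * (bg 0 * bg 1)) := by group
  · -- D
    show (bg 0 * bg 2) * (bg 0 * bg 1) ^ 2 * (bg 0 * bg 2)
        = (bg 0 * bg 0) * (bg 0 * bg 1) * (bg 0 * bg 2) * (bg 0 * bg 0)⁻¹ * (bg 0 * bg 1) *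
          (bg 0 * bg 0)
    simp only [pow_two]
    calc (bg 0 * bg 2) * ((bg 0 * bg 1) * (bg 0 * bg 1)) * (bg 0 * bg 2)
        = bg 0 * (bg 2 * bg 0) * (bg 1 * bg 0 * bg 1) * (bg 0 * bg 2) := by group
      _ = bg 0 * (bg 0 * bg 2) * (bg 1 * bg 0 * bg 1) * (bg 0 * bg 2) := by rw [← h02 hn]
      _ = bg 0 * (bg 0 * bg 2) * (bg 0 * bg 1 * bg 0) * (bg 0 * bg 2) := by rw [← h01]
      _ = bg 0 * bg 0 * (bg 2 * bg 0) * bg 1 * bg 0 * (bg 0 * bg 2) := by group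
      _ = bg 0 * bg 0 * (bg 0 * bg 2) * bg 1 * bg 0 * (bg 0 * bg 2) := by rw [← h02 hn]
      _ = bg 0 * bg 0 * bg 0 * bg 2 * bg 1 * bg 0 * (bg 0 * bg 2) := by group
      _ = bg 0 * bg 0 * bg 0 * bg 2 * bg 1 * bg 0 * (bg 2 * bg 0) := by rw [h02 hn]
      _ = bg 0 * bg 0 * bg 0 * bg 2 * bg 1 * (bg 0 * bg 2) * bg 0 := by group
      _ = bg 0 * bg 0 * bg 0 * bg 2 * bg 1 * (bg 2 * bg 0) * bg 0 := by rw [h02 hn]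
      _ = bg 0 * bg 0 * bg 0 * (bg 2 * bg 1 * bg 2) * bg 0 * bg 0 := by group
      _ = bg 0 * bg 0 * bg 0 * (bg 1 * bg 2 * bg 1) * bg 0 * bg 0 := by rw [← h12 hn]
      _ = bg 0 * bg 0 * bg 0 * bg 1 * (bg 2 * bg 0) * (bg 0)⁻¹ * bg 1 * (bg 0 * bg 0) := by
          group
      _ = bg 0 * bg 0 * bg 0 * bg 1 * (bg 0 * bg 2) * (bg 0)⁻¹ * bg 1 * (bg 0 * bg 0) := by
          rw [← h02 hn]
      _ = (bg 0 * bg 0) * (bg 0 * bg 1) * (bg 0 * bg 2) * (bg 0 * bg 0)⁻¹ * (bg 0 * bg 1) *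
          (bg 0 * bg 0) := by group
  · -- E1
    have hj2 : 2 ≤ (j : ℕ) := by omega
    show (bg 0 * bg 1) ^ 2 * (bg 0 * bg j) = (bg 0 * bg j) * (bg 0 * bg 1) * (bg 0 * bg 0)
    simp only [pow_two]
    have hR : (bg 0 * bg j : BraidGroupA n) * (bg 0 * bg 1) * (bg 0 * bg 0)
        = bg 0 * bg 0 * bg 1 * bg 0 * bg 0 * bg j := by
      calc (bg 0 * bg j) * (bg 0 * bg 1) * (bg 0 * bg 0)
          = bg 0 * (bg j * bg 0) * bg 1 * (bg 0 * bg 0) := by group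
        _ = bg 0 * (bg 0 * bg j) * bg 1 * (bg 0 * bg 0) := by rw [← h0j hj2]
        _ = bg 0 * bg 0 * (bg j * bg 1) * (bg 0 * bg 0) := by group
        _ = bg 0 * bg 0 * (bg 1 * bg j) * (bg 0 * bg 0) := by rw [← h1j hj]
        _ = bg 0 * bg 0 * bg 1 * (bg j * bg 0) * bg 0 := by group
        _ = bg 0 * bg 0 * bg 1 * (bg 0 * bg j) * bg 0 := by rw [← h0j hj2]
        _ = bg 0 * bg 0 * bg 1 * bg 0 * (bg j * bg 0) := by group
        _ = bg 0 * bg 0 * bg 1 * bg 0 * (bg 0 * bg j) := by rw [← h0j hj2]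
        _ = bg 0 * bg 0 * bg 1 * bg 0 * bg 0 * bg j := by group
    rw [hR]
    calc (bg 0 * bg 1) * (bg 0 * bg 1) * (bg 0 * bg j)
        = bg 0 * (bg 1 * bg 0 * bg 1) * (bg 0 * bg j) := by group
      _ = bg 0 * (bg 0 * bg 1 * bg 0) * (bg 0 * bg j) := by rw [← h01]
      _ = bg 0 * bg 0 * bg 1 * bg 0 * bg 0 * bg j := by group
  · -- E2
    have hj2 : 2 ≤ (j : ℕ) := by omega
    show (bg 0 * bg j) * (bg 0 * bg 1) ^ 2 = (bg 0 * bg 0) * (bg 0 * bg 1) * (bg 0 * bg j)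
    simp only [pow_two]
    calc (bg 0 * bg j) * ((bg 0 * bg 1) * (bg 0 * bg 1))
        = bg 0 * (bg j * bg 0) * (bg 1 * bg 0 * bg 1) := by group
      _ = bg 0 * (bg 0 * bg j) * (bg 1 * bg 0 * bg 1) := by rw [← h0j hj2]
      _ = bg 0 * (bg 0 * bg j) * (bg 0 * bg 1 * bg 0) := by rw [← h01]
      _ = bg 0 * bg 0 * (bg j * bg 0) * (bg 1 * bg 0) := by group
      _ = bg 0 * bg 0 * (bg 0 * bg j) * (bg 1 * bg 0) := by rw [← h0j hj2]
      _ = bg 0 * bg 0 * bg 0 * (bg j * bg 1) * bg 0 := by group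
      _ = bg 0 * bg 0 * bg 0 * (bg 1 * bg j) * bg 0 := by rw [← h1j hj]
      _ = bg 0 * bg 0 * bg 0 * bg 1 * (bg j * bg 0) := by group
      _ = bg 0 * bg 0 * bg 0 * bg 1 * (bg 0 * bg j) := by rw [← h0j hj2]
      _ = (bg 0 * bg 0) * (bg 0 * bg 1) * (bg 0 * bg j) := by group
  · -- F
    have hv : ((i + 1 : Fin (n + 2)) : ℕ) = (i : ℕ) + 1 := fin_add_one_val i hi
    have hxu : (bg 0 : BraidGroupA n) * bg i = bg i * bg 0 := h0j h2
    have hxv : (bg 0 : BraidGroupA n) * bg (i + 1) = bg (i + 1) * bg 0 := h0j (by omega)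
    show (bg 0 * bg i) * (bg 0 * bg (i + 1)) * (bg 0 * bg i)
        = (bg 0 * bg (i + 1)) * (bg 0 * bg i) * (bg 0 * bg (i + 1))
    calc (bg 0 * bg i) * (bg 0 * bg (i + 1)) * (bg 0 * bg i)
        = bg 0 * (bg i * bg 0) * (bg (i + 1) * bg 0) * bg i := by group
      _ = bg 0 * (bg 0 * bg i) * (bg (i + 1) * bg 0) * bg i := by rw [← hxu]
      _ = bg 0 * (bg 0 * bg i) * (bg 0 * bg (i + 1)) * bg i := by rw [← hxv]
      _ = bg 0 * bg 0 * (bg i * bg 0) * (bg (i + 1) * bg i) := by group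
      _ = bg 0 * bg 0 * (bg 0 * bg i) * (bg (i + 1) * bg i) := by rw [← hxu]
      _ = bg 0 * bg 0 * bg 0 * (bg i * bg (i + 1) * bg i) := by group
      _ = bg 0 * bg 0 * bg 0 * (bg (i + 1) * bg i * bg (i + 1)) := by rw [braid_rel i hi]
      _ = bg 0 * bg 0 * (bg 0 * bg (i + 1)) * bg i * bg (i + 1) := by group
      _ = bg 0 * bg 0 * (bg (i + 1) * bg 0) * bg i * bg (i + 1) := by rw [hxv]
      _ = bg 0 * (bg 0 * bg (i + 1)) * (bg 0 * bg i) * bg (i + 1) := by group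
      _ = bg 0 * (bg (i + 1) * bg 0) * (bg 0 * bg i) * bg (i + 1) := by rw [hxv]
      _ = bg 0 * bg (i + 1) * bg 0 * (bg 0 * bg i) * bg (i + 1) := by group
      _ = bg 0 * bg (i + 1) * bg 0 * (bg i * bg 0) * bg (i + 1) := by rw [hxu]
      _ = (bg 0 * bg (i + 1)) * (bg 0 * bg i) * (bg 0 * bg (i + 1)) := by group
  · -- G
    show (bg 0 * bg i) * (bg 0 * bg j) = (bg 0 * bg j) * (bg 0 * bg i)
    have hxi : Commute (bg 0 : BraidGroupA n) (bg i) := h0j h2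
    have hxj : Commute (bg 0 : BraidGroupA n) (bg j) := h0j (by omega)
    have hij' : Commute (bg i : BraidGroupA n) (bg j) := comm_rel i j hij
    have h1 : Commute (bg 0 : BraidGroupA n) (bg 0 * bg j) := (Commute.refl _).mul_right hxj
    have h2' : Commute (bg i : BraidGroupA n) (bg 0 * bg j) := (hxi.symm).mul_right hij'
    exact h1.mul_left h2'

def Phi : PresentedGroup (altBraidARels n) →* BraidGroupA n :=
  PresentedGroup.toGroup phi_aux

lemma Phi_of (i : Fin (n + 2)) : Phi (r i) = bg 0 * bg i := PresentedGroup.toGroup.of _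

/- ### sign and evenness -/

def sgnE : SemidirectProduct (PresentedGroup (altBraidARels n)) (Multiplicative ℤ)
    (phiAct (n := n)) →* ℤˣ :=
  (zpowersHom ℤˣ (-1)).comp SemidirectProduct.rightHom

lemma Psi_of' (i : Fin (n + 2)) : Psi (PresentedGroup.of i) = psif i :=
  PresentedGroup.toGroup.of _

lemma sign_gen (i : Fin (n + 2)) : braidASign n (PresentedGroup.of i) = -1 :=
  PresentedGroup.toGroup.of _

lemma sign_bg (i : Fin (n + 2)) : braidASign n (bg i) = -1 := sign_gen i

lemma sign_eq : ((sgnE (n := n)).comp Psi) = braidASign n := by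
  refine PresentedGroup.ext fun i => ?_
  show sgnE (Psi (PresentedGroup.of i)) = braidASign n (PresentedGroup.of i)
  rw [Psi_of', sign_gen]
  show (-1 : ℤˣ) ^ (Multiplicative.toAdd (Multiplicative.ofAdd (-1 : ℤ))) = -1
  rw [toAdd_ofAdd, zpow_neg, zpow_one]
  decide

lemma neg_one_zpow_eq_one {m : ℤ} (h : (-1 : ℤˣ) ^ m = 1) : 2 ∣ m := by
  rcases Int.even_or_odd m with he | ho
  · obtain ⟨s, hs⟩ := he
    exact ⟨s, by omega⟩
  · exfalso
    obtain ⟨k, hk⟩ := ho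
    rw [hk, zpow_add, zpow_mul, zpow_one,
      show ((-1 : ℤˣ) ^ (2 : ℤ)) = 1 by decide, one_zpow, one_mul] at h
    exact absurd h (by decide)

lemma psi_right_even (a : braidAAlt n) :
    2 ∣ Multiplicative.toAdd (Psi (↑a : BraidGroupA n)).right := by
  have ha : braidASign n ↑a = 1 := a.2
  have h := DFunLike.congr_fun (sign_eq (n := n)) (↑a : BraidGroupA n)
  simp only [MonoidHom.comp_apply] at h
  rw [ha] at h
  exact neg_one_zpow_eq_one h

/- ### Θ : alternating subgroup → P -/

def Theta : braidAAlt n →* PresentedGroup (altBraidARels n) :=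
  MonoidHom.mk' (fun a => (Psi (↑a : BraidGroupA n)).left *
    r 0 ^ (Multiplicative.toAdd (Psi (↑a : BraidGroupA n)).right / 2)) (by
    intro a b
    obtain ⟨s, hs⟩ := psi_right_even a
    obtain ⟨t, ht⟩ := psi_right_even b
    have hab : ((↑(a * b) : BraidGroupA n)) = ↑a * ↑b := rfl
    simp only [hab, map_mul, SemidirectProduct.mul_left, SemidirectProduct.mul_right,
      toAdd_mul, hs, ht]
    have hdiv1 : (2 * s + 2 * t) / 2 = s + t := by
      rw [show 2 * s + 2 * t = 2 * (s + t) by ring, Int.mul_ediv_cancel_left _ two_ne_zero]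
    have hdiv2 : (2 * s) / 2 = s := Int.mul_ediv_cancel_left _ two_ne_zero
    have hdiv3 : (2 * t) / 2 = t := Int.mul_ediv_cancel_left _ two_ne_zero
    rw [hdiv1, hdiv2, hdiv3]
    have hact : (phiAct (Psi (↑a : BraidGroupA n)).right) (Psi (↑b : BraidGroupA n)).left
        = r 0 ^ s * (Psi (↑b : BraidGroupA n)).left * (r 0 ^ s)⁻¹ := by
      have : (phiAct (n := n)) (Psi (↑a : BraidGroupA n)).right
          = tauE ^ (Multiplicative.toAdd (Psi (↑a : BraidGroupA n)).right) := rfl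
      rw [this, hs, tauE_even]
    rw [hact]
    generalize (Psi (↑a : BraidGroupA n)).left = p
    generalize (Psi (↑b : BraidGroupA n)).left = q
    group)

lemma Theta_apply (a : braidAAlt n) :
    Theta a = (Psi (↑a : BraidGroupA n)).left *
      r 0 ^ (Multiplicative.toAdd (Psi (↑a : BraidGroupA n)).right / 2) := rfl

/- ### Φ lands in the alternating subgroup -/

lemma phi_mem (z : PresentedGroup (altBraidARels n)) : Phi z ∈ braidAAlt n := by
  have h : ((braidASign n).comp Phi) = 1 := by
    refine PresentedGroup.ext fun i => ?_
    show braidASign n (Phi (PresentedGroup.of i)) = 1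
    rw [show (PresentedGroup.of i : PresentedGroup (altBraidARels n)) = r i from rfl,
      Phi_of, map_mul, sign_bg, sign_bg]
    decide
  exact DFunLike.congr_fun h z

def PhiA : PresentedGroup (altBraidARels n) →* braidAAlt n :=
  Phi.codRestrict _ phi_mem

lemma PhiA_coe (z : PresentedGroup (altBraidARels n)) :
    ((PhiA z : braidAAlt n) : BraidGroupA n) = Phi z := rfl

/- ### Θ ∘ Φ = id -/

lemma tauE_inv_apply (x : PresentedGroup (altBraidARels n)) : tauE⁻¹ x = tauHom' x := rfl

lemma tauE_nat_two_inv_apply (x : PresentedGroup (altBraidARels n)) :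
    ((tauE ^ (2 : ℕ))⁻¹) x = (r 0)⁻¹ * x * r 0 := by
  have h : ((tauE ^ (2 : ℕ))⁻¹ : MulAut (PresentedGroup (altBraidARels n)))
      = MulAut.conj ((r 0)⁻¹) := by
    rw [map_inv, ← tauE_sq, ← zpow_natCast]
    norm_num
  rw [h, MulAut.conj_apply, inv_inv]

lemma tauE_inv_inv_apply (x : PresentedGroup (altBraidARels n)) :
    tauE⁻¹ (tauE⁻¹ x) = (r 0)⁻¹ * x * r 0 := by
  rw [← MulAut.mul_apply,
    show (tauE⁻¹ * tauE⁻¹ : MulAut (PresentedGroup (altBraidARels n))) = (tauE ^ (2 : ℕ))⁻¹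
      by group,
    tauE_nat_two_inv_apply]

lemma theta_phi_id : ((Theta (n := n)).comp PhiA) = MonoidHom.id _ := by
  refine PresentedGroup.ext fun i => ?_
  show Theta (PhiA (PresentedGroup.of i)) = PresentedGroup.of i
  rw [Theta_apply]
  have hco : ((PhiA (PresentedGroup.of i) : braidAAlt n) : BraidGroupA n)
      = bg 0 * bg i := by
    rw [PhiA_coe]
    exact Phi_of i
  rw [hco, show (bg 0 : BraidGroupA n) = braidAGen n 0 from rfl,
    show (bg i : BraidGroupA n) = braidAGen n i from rfl, map_mul, Psi_of, Psi_of]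
  simp only [SemidirectProduct.mul_left, SemidirectProduct.mul_right, psif]
  simp only [SemidirectProduct.mul_left, SemidirectProduct.mul_right, psif, phiAct,
    zpowersHom_apply, toAdd_mul, toAdd_ofAdd]
  norm_num
  show tauE⁻¹ (r 0) * tauE⁻¹ (tauE⁻¹ (r i)) * (r 0)⁻¹ = PresentedGroup.of i
  rw [tauE_inv_inv_apply, tauE_inv_apply, tauHom'_of, tf'_ne zero_ne_one',
    show (PresentedGroup.of i : PresentedGroup (altBraidARels n)) = r i from rfl]
  group

lemma theta_phi (z : PresentedGroup (altBraidARels n)) : Theta (PhiA z) = z :=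
  DFunLike.congr_fun theta_phi_id z

/- ### Φ ∘ Θ = id via the retraction F -/

lemma phi_tau_apply (x : PresentedGroup (altBraidARels n)) :
    Phi (tauHom x) = bg 0 * Phi x * (bg 0)⁻¹ := by
  have h : (Phi.comp tauHom : PresentedGroup (altBraidARels n) →* BraidGroupA n)
      = ((MulAut.conj (bg 0)).toMonoidHom.comp Phi) := by
    refine PresentedGroup.ext fun i => ?_
    show Phi (tauHom (r i)) = MulAut.conj (bg 0) (Phi (r i))
    rw [MulAut.conj_apply]
    by_cases h1 : i = 1
    · subst h1
      rw [tauHom_of, tf_one, map_mul, map_pow, map_inv, Phi_of, Phi_of]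
      simp only [pow_two]
      calc (bg 0 * bg 1) * (bg 0 * bg 1) * ((bg 0 * bg 0))⁻¹
          = bg 0 * (bg 1 * bg 0 * bg 1) * (bg 0 * bg 0)⁻¹ := by group
        _ = bg 0 * (bg 0 * bg 1 * bg 0) * (bg 0 * bg 0)⁻¹ := by rw [h01]
        _ = bg 0 * (bg 0 * bg 1) * (bg 0)⁻¹ := by group
    · rw [tauHom_of, tf_ne h1, Phi_of]
      by_cases h0 : i = 0
      · subst h0
        group
      · have h2 : 2 ≤ (i : ℕ) := two_le_of_ne h0 h1
        have hxu : (bg 0 : BraidGroupA n) * bg i = bg i * bg 0 := h0j h2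
        symm
        calc bg 0 * (bg 0 * bg i) * (bg 0)⁻¹
            = bg 0 * bg 0 * (bg i * (bg 0)⁻¹) := by group
          _ = bg 0 * bg 0 * ((bg 0)⁻¹ * bg i) := by
              rw [(show Commute (bg 0 : BraidGroupA n) (bg i) by exact hxu).inv_left.eq]
          _ = bg 0 * bg i := by group
  have := DFunLike.congr_fun h x
  simpa [MulAut.conj_apply] using this

lemma phi_tauE_zpow (m : ℤ) (x : PresentedGroup (altBraidARels n)) :
    Phi ((tauE ^ m) x) = bg 0 ^ m * Phi x * (bg 0 ^ m)⁻¹ := by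
  have inv_case : ∀ y : PresentedGroup (altBraidARels n),
      Phi (tauE⁻¹ y) = (bg 0)⁻¹ * Phi y * bg 0 := by
    intro y
    have h := phi_tau_apply (tauE⁻¹ y)
    rw [show tauHom (tauE⁻¹ y) = tauE (tauE⁻¹ y) from rfl, MulAut.apply_inv_self] at h
    rw [h]
    group
  induction m using Int.induction_on generalizing x with
  | zero => simp
  | succ k ih =>
    rw [zpow_add_one, MulAut.mul_apply, ih (tauE x),
      show tauE x = tauHom x from rfl, phi_tau_apply]
    group
  | pred k ih =>
    rw [show (-(k : ℤ) - 1) = (-(k : ℤ)) + (-1) by ring, zpow_add, zpow_neg_one,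
      MulAut.mul_apply, ih (tauE⁻¹ x), inv_case]
    group

def FF : BraidGroupA n →* BraidGroupA n :=
  MonoidHom.mk' (fun g => Phi ((Psi g).left) * bg 0 ^ (Multiplicative.toAdd (Psi g).right)) (by
    intro g h
    simp only [map_mul, SemidirectProduct.mul_left, SemidirectProduct.mul_right, toAdd_mul]
    rw [show (phiAct (n := n)) (Psi g).right ((Psi h).left)
        = (tauE ^ (Multiplicative.toAdd (Psi g).right)) ((Psi h).left) from rfl,
      phi_tauE_zpow]
    generalize Phi ((Psi g).left) = p
    generalize Phi ((Psi h).left) = q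
    generalize Multiplicative.toAdd (Psi g).right = s
    generalize Multiplicative.toAdd (Psi h).right = t
    group)

lemma FF_id : (FF : BraidGroupA n →* BraidGroupA n) = MonoidHom.id _ := by
  refine PresentedGroup.ext fun i => ?_
  show Phi ((Psi (PresentedGroup.of i)).left) * bg 0 ^ (Multiplicative.toAdd
      (Psi (PresentedGroup.of i)).right) = PresentedGroup.of i
  rw [Psi_of']
  show Phi ((tauE ^ (-1 : ℤ)) (r i)) * bg 0 ^ (Multiplicative.toAdd (Multiplicative.ofAdd (-1 : ℤ)))
      = PresentedGroup.of i
  rw [toAdd_ofAdd, phi_tauE_zpow, Phi_of,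
    show (PresentedGroup.of i : BraidGroupA n) = bg i from rfl]
  group
  rw [zpow_neg_one]
  exact mul_inv_cancel_right (bg i) (bg 0)

lemma phi_theta (a : braidAAlt n) : PhiA (Theta a) = a := by
  apply Subtype.ext
  rw [PhiA_coe, Theta_apply]
  obtain ⟨s, hs⟩ := psi_right_even a
  have hFa := DFunLike.congr_fun (FF_id (n := n)) (↑a : BraidGroupA n)
  have hFa' : Phi ((Psi (↑a : BraidGroupA n)).left) *
      bg 0 ^ (Multiplicative.toAdd (Psi (↑a : BraidGroupA n)).right)
      = (↑a : BraidGroupA n) := hFa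
  have hb : (bg 0 * bg 0 : BraidGroupA n) ^ s = bg 0 ^ (2 * s) := by
    rw [show (bg 0 * bg 0 : BraidGroupA n) = bg 0 ^ (2 : ℤ) by
        rw [show (2 : ℤ) = 1 + 1 by norm_num, zpow_add, zpow_one], ← zpow_mul]
  rw [map_mul, map_zpow, Phi_of, hs, Int.mul_ediv_cancel_left _ two_ne_zero, hb, ← hs]
  exact hFa'

def eIso : PresentedGroup (altBraidARels n) ≃* braidAAlt n :=
  { toFun := PhiA
    invFun := Theta
    left_inv := theta_phi
    right_inv := phi_theta
    map_mul' := map_mul PhiA }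

lemma eIso_spec (i : Fin (n + 2)) :
    ((eIso (PresentedGroup.of i) : braidAAlt n) : BraidGroupA n)
      = braidAGen n 0 * braidAGen n i := by
  show ((PhiA (PresentedGroup.of i) : braidAAlt n) : BraidGroupA n) = _
  rw [PhiA_coe, show (PresentedGroup.of i : PresentedGroup (altBraidARels n)) = r i from rfl,
    Phi_of]
  rfl

end AltP


/-- The alternating subgroup `𝓑⁺(A_{n+2})` of the type A braid group is isomorphic to the
presented group with generators `R_0, …, R_{n+1}` and the listed relations, via `R_i ↦ g_0 g_i`. -/
theorem alternating_braid_group_typeA_presentation (n : ℕ) :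
    ∃ e : PresentedGroup (altBraidARels n) ≃* braidAAlt n,
      ∀ i : Fin (n + 2),
        ((e (PresentedGroup.of i) : braidAAlt n) : BraidGroupA n) =
          braidAGen n 0 * braidAGen n i := by
  exact ⟨AltP.eIso, AltP.eIso_spec⟩
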